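/- Let < be a multiplicative order on the monomials of A. Let ρ_1,…,ρ_m ∈ I_A be homogeneous elements of degrees σ_1,…,σ_m ≥ 1, and for each j let w̃_j be the high term of ρ_j, i.e., the <-greatest monomial occurring with nonzero coefficient in ρ_j. If the sequence of words w̃_1,…,w̃_m is combinatorially free, then the sequence ρ_1,…,ρ_m is strongly free. -/

import Mathlib

/-!
Setup: `A = F_p⟨X_1,…,X_d⟩`, the free associative algebra over `F_p` on `d`
noncommuting variables, realized as the monoid algebra of the free monoid on `Fin d`.
-/

namespace MildStmt

/-- The free associative algebra `A = F_p⟨X_1,…,X_d⟩`. -/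
abbrev A (p d : ℕ) : Type := MonoidAlgebra (ZMod p) (FreeMonoid (Fin d))

/-- The generator `X_i` of `A`. -/
noncomputable def X (p d : ℕ) (i : Fin d) : A p d :=
  MonoidAlgebra.of (ZMod p) (FreeMonoid (Fin d)) (FreeMonoid.of i)

/-- The `τ`-weight of a word in the letters `X_1,…,X_d`. -/
def wt {d : ℕ} (τ : Fin d → ℕ) (w : FreeMonoid (Fin d)) : ℕ :=
  (w.toList.map τ).sum

/-- The degree-`n` homogeneous component `A_n` of `A`:
the `F_p`-span of the monomials of `τ`-weight `n`. -/
noncomputable def Asub (p d : ℕ) (τ : Fin d → ℕ) (n : ℕ) : Submodule (ZMod p) (A p d) :=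
  Submodule.span (ZMod p)
    {x | ∃ w : FreeMonoid (Fin d), wt τ w = n ∧
      x = MonoidAlgebra.of (ZMod p) (FreeMonoid (Fin d)) w}

/-- The two-sided ideal generated by a set `S ⊆ A`, as an `F_p`-submodule of `A`. -/
noncomputable def tsi (p d : ℕ) (S : Set (A p d)) : Submodule (ZMod p) (A p d) :=
  Submodule.span (ZMod p) {x | ∃ a s b, s ∈ S ∧ x = a * s * b}

/-- The augmentation ideal `I_A`: the two-sided ideal generated by `X_1,…,X_d`. -/
noncomputable def IA (p d : ℕ) : Submodule (ZMod p) (A p d) :=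
  tsi p d (Set.range (X p d))

/-- `dim_{F_p} B_n` where `B = A/R`, graded by the images `B_n` of the `A_n`,
with the convention that the dimension is `0` for negative `n`. -/
noncomputable def dimB (p d : ℕ) (R : Submodule (ZMod p) (A p d)) (τ : Fin d → ℕ)
    (n : ℤ) : ℕ :=
  if 0 ≤ n then Module.finrank (ZMod p) (Submodule.map R.mkQ (Asub p d τ n.toNat)) else 0


/-- The strong freeness condition for a sequence of homogeneous elements
`ρ_j` of degrees `σ_j`: the graded quotient `B = A/(ρ_1,…,ρ_m)` satisfies
`dim B_0 = 1` and `dim B_n − Σ_i dim B_{n−τ_i} + Σ_j dim B_{n−σ_j} = 0` for `n ≥ 1`. -/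
def StronglyFree (p d : ℕ) (τ : Fin d → ℕ) {m : ℕ} (σ : Fin m → ℕ)
    (ρ : Fin m → A p d) : Prop :=
  dimB p d (tsi p d (Set.range ρ)) τ 0 = 1 ∧
  ∀ n : ℤ, 1 ≤ n →
    (dimB p d (tsi p d (Set.range ρ)) τ n : ℤ)
      - ∑ i : Fin d, (dimB p d (tsi p d (Set.range ρ)) τ (n - (τ i : ℤ)) : ℤ)
      + ∑ j : Fin m, (dimB p d (tsi p d (Set.range ρ)) τ (n - (σ j : ℤ)) : ℤ) = 0

/-- Combinatorial freeness of a sequence of words. -/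
def CombFree {d m : ℕ} (w : Fin m → FreeMonoid (Fin d)) : Prop :=
  (∀ i j, i ≠ j → ∀ u v : FreeMonoid (Fin d), w j ≠ u * w i * v) ∧
  (∀ i j, ∀ x y x' y' : FreeMonoid (Fin d), x ≠ 1 → y ≠ 1 → x' ≠ 1 → y' ≠ 1 →
    w i = x * y → w j = x' * y' → x ≠ y')

/-- The coefficient of the monomial `w` in `ρ ∈ A`. -/
def coeff {p d : ℕ} (ρ : A p d) (w : FreeMonoid (Fin d)) : ZMod p :=
  ρ.coeff w

section Words
variable {α : Type*} {m : ℕ}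

def NormalL (W : Fin m → List α) (w : List α) : Prop := ∀ j u v, w ≠ u ++ W j ++ v

variable {W : Fin m → List α}

lemma occ_aux (hfac : ∀ i j u v, W j = u ++ W i ++ v → i = j ∧ u = [] ∧ v = [])
    (hchain : ∀ j k (a t r : List α), a ≠ [] → t ≠ [] → r ≠ [] →
      W j = a ++ t → W k = t ++ r → False)
    {v v' : List α} {j k : Fin m} {a : List α}
    (h2 : W j ++ v = a ++ (W k ++ v')) :
    (a = [] ∧ j = k ∧ v = v') ∨
    (∃ s, a = W j ++ s ∧ v = s ++ W k ++ v') := by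
  rcases List.append_eq_append_iff.1 h2 with ⟨t, hc, hv⟩ | ⟨t, hWj, hd⟩
  · exact Or.inr ⟨t, hc, by rw [hv, List.append_assoc]⟩
  · by_cases ht : t = []
    · subst ht
      refine Or.inr ⟨[], by simpa using hWj.symm, ?_⟩
      simpa using hd.symm
    by_cases ha0 : a = []
    · subst ha0
      simp only [List.nil_append] at hWj
      subst hWj
      rcases List.append_eq_append_iff.1 hd with ⟨r, hjk, hv'⟩ | ⟨r, hk, hv⟩
      · obtain ⟨rfl, -, hr⟩ := hfac k j [] r (by simpa using hjk)
        subst hr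
        simp only [List.nil_append] at hv'
        exact Or.inl ⟨rfl, rfl, hv'.symm⟩
      · obtain ⟨rfl, -, hr⟩ := hfac j k [] r (by simpa using hk)
        subst hr
        simp only [List.nil_append] at hv
        exact Or.inl ⟨rfl, rfl, hv⟩
    · exfalso
      rcases List.append_eq_append_iff.1 hd with ⟨r, ht2, hv'⟩ | ⟨r, hWk, hv⟩
      · obtain ⟨-, ha, -⟩ := hfac k j a r (by rw [hWj, ht2, List.append_assoc])
        exact ha0 ha
      · by_cases hr : r = []
        · subst hr
          simp only [List.append_nil] at hWk
          obtain ⟨-, ha, -⟩ := hfac k j a [] (by rw [hWj, hWk, List.append_nil])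
          exact ha0 ha
        · exact hchain j k a t r ha0 ht hr hWj hWk

lemma occ (hfac : ∀ i j u v, W j = u ++ W i ++ v → i = j ∧ u = [] ∧ v = [])
    (hchain : ∀ j k (a t r : List α), a ≠ [] → t ≠ [] → r ≠ [] →
      W j = a ++ t → W k = t ++ r → False)
    {u v u' v' : List α} {j k : Fin m}
    (h : u ++ W j ++ v = u' ++ W k ++ v') :
    (u = u' ∧ j = k ∧ v = v') ∨
    (∃ s, u' = u ++ W j ++ s ∧ v = s ++ W k ++ v') ∨
    (∃ s, u = u' ++ W k ++ s ∧ v' = s ++ W j ++ v) := by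
  rw [List.append_assoc, List.append_assoc] at h
  rcases List.append_eq_append_iff.1 h with ⟨a, hu', h2⟩ | ⟨a, hu, h2⟩
  · rcases occ_aux hfac hchain h2 with ⟨ha, hjk, hv⟩ | ⟨s, ha, hv⟩
    · subst ha; exact Or.inl ⟨by simpa using hu'.symm, hjk, hv⟩
    · exact Or.inr (Or.inl ⟨s, by rw [hu', ha, List.append_assoc], hv⟩)
  · rcases occ_aux hfac hchain h2 with ⟨ha, hjk, hv⟩ | ⟨s, ha, hv⟩
    · subst ha; exact Or.inl ⟨by simpa using hu, hjk.symm, hv.symm⟩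
    · exact Or.inr (Or.inr ⟨s, by rw [hu, ha, List.append_assoc], hv⟩)

lemma normalL_infix {w a u b : List α} (hn : NormalL W w) (hw : w = a ++ u ++ b) :
    NormalL W u := by
  intro k x y hxy
  exact hn k (a ++ x) (y ++ b) (by rw [hw, hxy]; simp [List.append_assoc])

lemma key_normal (hfac : ∀ i j u v, W j = u ++ W i ++ v → i = j ∧ u = [] ∧ v = [])
    (hchain : ∀ j k (a t r : List α), a ≠ [] → t ≠ [] → r ≠ [] →
      W j = a ++ t → W k = t ++ r → False)
    {v w' : List α} {i : α} {j : Fin m} (hv : NormalL W v) (hj : W j = w' ++ [i]) :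
    NormalL W (v ++ w') := by
  intro k x y hxy
  have h : v ++ W j ++ [] = x ++ W k ++ (y ++ [i]) := by
    rw [hj, ← List.append_assoc, hxy]; simp [List.append_assoc]
  rcases occ hfac hchain h with ⟨-, -, hveq⟩ | ⟨s, -, hveq⟩ | ⟨s, hveq, -⟩
  · simp at hveq
  · simp at hveq
  · exact hv k x s hveq

lemma suffix_unique (hne : ∀ j, W j ≠ [])
    (hfac : ∀ i j u v, W j = u ++ W i ++ v → i = j ∧ u = [] ∧ v = [])
    (hchain : ∀ j k (a t r : List α), a ≠ [] → t ≠ [] → r ≠ [] →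
      W j = a ++ t → W k = t ++ r → False)
    {v v' : List α} {j k : Fin m} (h : v ++ W j = v' ++ W k) : v = v' ∧ j = k := by
  have h' : v ++ W j ++ [] = v' ++ W k ++ [] := by simp [h]
  rcases occ hfac hchain h' with ⟨h1, h2, -⟩ | ⟨s, -, hveq⟩ | ⟨s, -, hveq⟩
  · exact ⟨h1, h2⟩
  · exact absurd (List.append_eq_nil_iff.1 (List.append_eq_nil_iff.1 hveq.symm).1).2 (hne k)
  · exact absurd (List.append_eq_nil_iff.1 (List.append_eq_nil_iff.1 hveq.symm).1).2 (hne j)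

end Words
section Count
open Classical
variable {d m : ℕ} (τ : Fin d → ℕ) (W : Fin m → List (Fin d))

def wtL (τ : Fin d → ℕ) (w : List (Fin d)) : ℕ := (w.map τ).sum

lemma wtL_append (u v : List (Fin d)) : wtL τ (u ++ v) = wtL τ u + wtL τ v := by
  simp [wtL]

lemma length_le_wtL (hτ : ∀ i, 1 ≤ τ i) (w : List (Fin d)) : w.length ≤ wtL τ w := by
  induction w with
  | nil => simp [wtL]
  | cons a l ih =>
      simp only [wtL, List.map_cons, List.sum_cons, List.length_cons]
      simp only [wtL] at ih
      have := hτ a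
      omega

lemma wtL_eq_zero (hτ : ∀ i, 1 ≤ τ i) {w : List (Fin d)} (h : wtL τ w = 0) : w = [] := by
  have := length_le_wtL τ hτ w
  rw [h] at this
  exact List.eq_nil_of_length_eq_zero (Nat.le_zero.1 this)

/-- all words of length at most `n`. -/
noncomputable def allW (n : ℕ) : Finset (List (Fin d)) :=
  (List.finite_length_le (Fin d) n).toFinset

lemma mem_allW {n : ℕ} {w : List (Fin d)} : w ∈ (allW n : Finset (List (Fin d))) ↔ w.length ≤ n :=
  Set.Finite.mem_toFinset _

/-- words of weight `n`. -/
noncomputable def wordsF (n : ℕ) : Finset (List (Fin d)) :=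
  (allW n).filter (fun w => wtL τ w = n)

lemma mem_wordsF (hτ : ∀ i, 1 ≤ τ i) {n : ℕ} {w : List (Fin d)} :
    w ∈ wordsF τ n ↔ wtL τ w = n := by
  unfold wordsF
  simp only [Finset.mem_filter, mem_allW, and_iff_right_iff_imp]
  intro h
  exact h ▸ length_le_wtL τ hτ w

/-- normal words of weight `n`. -/
noncomputable def NF (n : ℕ) : Finset (List (Fin d)) :=
  (wordsF τ n).filter (NormalL W)

noncomputable def NNF (n : ℕ) : Finset (List (Fin d)) :=
  (wordsF τ n).filter (fun w => ¬ NormalL W w)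

lemma wordsF_card_split (n : ℕ) :
    (wordsF τ n).card = (NF τ W n).card + (NNF τ W n).card := by
  rw [NF, NNF]
  exact (Finset.card_filter_add_card_filter_not (p := NormalL W)).symm

lemma mem_NF (hτ : ∀ i, 1 ≤ τ i) {n : ℕ} {w : List (Fin d)} :
    w ∈ NF τ W n ↔ NormalL W w ∧ wtL τ w = n := by
  rw [NF, Finset.mem_filter, mem_wordsF τ hτ, and_comm]

lemma mem_NNF (hτ : ∀ i, 1 ≤ τ i) {n : ℕ} {w : List (Fin d)} :
    w ∈ NNF τ W n ↔ ¬ NormalL W w ∧ wtL τ w = n := by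
  rw [NNF, Finset.mem_filter, mem_wordsF τ hτ, and_comm]

lemma NF_zero (hτ : ∀ i, 1 ≤ τ i) (hne : ∀ j, W j ≠ []) : NF τ W 0 = {[]} := by
  ext w
  rw [mem_NF τ W hτ, Finset.mem_singleton]
  constructor
  · rintro ⟨-, h0⟩; exact wtL_eq_zero τ hτ h0
  · rintro rfl
    refine ⟨fun j u v h => ?_, rfl⟩
    · have := congrArg List.length h
      simp at this
      exact hne j (List.eq_nil_of_length_eq_zero (by omega))

lemma NNF_zero (hτ : ∀ i, 1 ≤ τ i) (hne : ∀ j, W j ≠ []) : NNF τ W 0 = ∅ := by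
  ext w
  rw [mem_NNF τ W hτ]
  simp only [Finset.notMem_empty, iff_false, not_and]
  intro hnn h0
  have := wtL_eq_zero τ hτ h0
  subst this
  apply hnn
  intro j u v h
  have := congrArg List.length h
  simp at this
  exact hne j (List.eq_nil_of_length_eq_zero (by omega))

end Count
section Count2
open Classical
variable {d m : ℕ} (τ : Fin d → ℕ) (σ : Fin m → ℕ) (W : Fin m → List (Fin d))

noncomputable def DI (i : Fin d) (n : ℕ) : Finset (List (Fin d)) :=
  (allW n).filter (fun w => NormalL W w ∧ wtL τ w + τ i = n)

noncomputable def DJ (j : Fin m) (n : ℕ) : Finset (List (Fin d)) :=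
  (allW n).filter (fun w => NormalL W w ∧ wtL τ w + σ j = n)

lemma mem_DI (hτ : ∀ i, 1 ≤ τ i) {i : Fin d} {n : ℕ} {w : List (Fin d)} :
    w ∈ DI τ W i n ↔ NormalL W w ∧ wtL τ w + τ i = n := by
  unfold DI
  simp only [Finset.mem_filter, mem_allW, and_iff_right_iff_imp]
  rintro ⟨-, h⟩
  exact le_trans (length_le_wtL τ hτ w) (by omega)

lemma mem_DJ (hτ : ∀ i, 1 ≤ τ i) {j : Fin m} {n : ℕ} {w : List (Fin d)} :
    w ∈ DJ τ σ W j n ↔ NormalL W w ∧ wtL τ w + σ j = n := by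
  unfold DJ
  simp only [Finset.mem_filter, mem_allW, and_iff_right_iff_imp]
  rintro ⟨-, h⟩
  exact le_trans (length_le_wtL τ hτ w) (by omega)

lemma DI_card (hτ : ∀ i, 1 ≤ τ i) {i : Fin d} {n : ℕ} (h : τ i ≤ n) :
    (DI τ W i n).card = (NF τ W (n - τ i)).card := by
  congr 1
  ext w
  rw [mem_DI τ W hτ, mem_NF τ W hτ]
  exact and_congr_right fun _ => by omega

lemma DI_card_zero (hτ : ∀ i, 1 ≤ τ i) {i : Fin d} {n : ℕ} (h : ¬ τ i ≤ n) :
    (DI τ W i n).card = 0 := by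
  rw [Finset.card_eq_zero]
  ext w
  rw [mem_DI τ W hτ]
  simp only [Finset.notMem_empty, iff_false]
  rintro ⟨-, hw⟩
  omega

lemma DJ_card (hτ : ∀ i, 1 ≤ τ i) {j : Fin m} {n : ℕ} (h : σ j ≤ n) :
    (DJ τ σ W j n).card = (NF τ W (n - σ j)).card := by
  congr 1
  ext w
  rw [mem_DJ τ σ W hτ, mem_NF τ W hτ]
  exact and_congr_right fun _ => by omega

lemma DJ_card_zero (hτ : ∀ i, 1 ≤ τ i) {j : Fin m} {n : ℕ} (h : ¬ σ j ≤ n) :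
    (DJ τ σ W j n).card = 0 := by
  rw [Finset.card_eq_zero]
  ext w
  rw [mem_DJ τ σ W hτ]
  simp only [Finset.notMem_empty, iff_false]
  rintro ⟨-, hw⟩
  omega

noncomputable def E1 (n : ℕ) : Finset (List (Fin d)) :=
  Finset.univ.biUnion (fun i : Fin d => (DI τ W i n).image (fun w => w ++ [i]))

noncomputable def E2 (n : ℕ) : Finset (List (Fin d)) :=
  Finset.univ.biUnion (fun j : Fin m => (DJ τ σ W j n).image (fun w => w ++ W j))

lemma mem_E1 (hτ : ∀ i, 1 ≤ τ i) {n : ℕ} {w : List (Fin d)} :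
    w ∈ E1 τ W n ↔ ∃ i u, NormalL W u ∧ wtL τ u + τ i = n ∧ w = u ++ [i] := by
  unfold E1
  simp only [Finset.mem_biUnion, Finset.mem_univ, true_and, Finset.mem_image]
  constructor
  · rintro ⟨i, u, hu, rfl⟩
    rw [mem_DI τ W hτ] at hu
    exact ⟨i, u, hu.1, hu.2, rfl⟩
  · rintro ⟨i, u, h1, h2, rfl⟩
    exact ⟨i, u, (mem_DI τ W hτ).2 ⟨h1, h2⟩, rfl⟩

lemma mem_E2 (hτ : ∀ i, 1 ≤ τ i) {n : ℕ} {w : List (Fin d)} :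
    w ∈ E2 τ σ W n ↔ ∃ j u, NormalL W u ∧ wtL τ u + σ j = n ∧ w = u ++ W j := by
  unfold E2
  simp only [Finset.mem_biUnion, Finset.mem_univ, true_and, Finset.mem_image]
  constructor
  · rintro ⟨j, u, hu, rfl⟩
    rw [mem_DJ τ σ W hτ] at hu
    exact ⟨j, u, hu.1, hu.2, rfl⟩
  · rintro ⟨j, u, h1, h2, rfl⟩
    exact ⟨j, u, (mem_DJ τ σ W hτ).2 ⟨h1, h2⟩, rfl⟩

lemma E1_card (hτ : ∀ i, 1 ≤ τ i) (n : ℕ) :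
    (E1 τ W n).card = ∑ i : Fin d, (DI τ W i n).card := by
  unfold E1
  rw [Finset.card_biUnion]
  · exact Finset.sum_congr rfl (fun i _ => Finset.card_image_of_injective _
      (fun u u' h => (List.append_inj' h rfl).1))
  · intro i _ i' _ hii'
    simp only [Finset.disjoint_left, Finset.mem_image]
    rintro w ⟨u, -, rfl⟩ ⟨u', -, h⟩
    obtain ⟨-, h2⟩ := List.append_inj' h.symm rfl
    exact hii' (by simpa using h2)

lemma E2_card (hτ : ∀ i, 1 ≤ τ i) (hne : ∀ j, W j ≠ [])
    (hfac : ∀ i j u v, W j = u ++ W i ++ v → i = j ∧ u = [] ∧ v = [])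
    (hchain : ∀ j k (a t r : List (Fin d)), a ≠ [] → t ≠ [] → r ≠ [] →
      W j = a ++ t → W k = t ++ r → False)
    (n : ℕ) :
    (E2 τ σ W n).card = ∑ j : Fin m, (DJ τ σ W j n).card := by
  unfold E2
  rw [Finset.card_biUnion]
  · exact Finset.sum_congr rfl (fun j _ => Finset.card_image_of_injective _
      (fun u u' h => (suffix_unique hne hfac hchain h).1))
  · intro j _ j' _ hjj'
    simp only [Finset.disjoint_left, Finset.mem_image]
    rintro w ⟨u, -, rfl⟩ ⟨u', -, h⟩
    exact hjj' (suffix_unique hne hfac hchain h.symm).2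

lemma E1_eq (hτ : ∀ i, 1 ≤ τ i) (hne : ∀ j, W j ≠ [])
    (hfac : ∀ i j u v, W j = u ++ W i ++ v → i = j ∧ u = [] ∧ v = [])
    (hchain : ∀ j k (a t r : List (Fin d)), a ≠ [] → t ≠ [] → r ≠ [] →
      W j = a ++ t → W k = t ++ r → False)
    (hwt : ∀ j, wtL τ (W j) = σ j)
    {n : ℕ} (hn : 1 ≤ n) :
    E1 τ W n = NF τ W n ∪ E2 τ σ W n := by
  ext w
  rw [mem_E1 τ W hτ, Finset.mem_union, mem_NF τ W hτ, mem_E2 τ σ W hτ]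
  constructor
  · rintro ⟨i, u, hu, hwtu, rfl⟩
    by_cases hN : NormalL W (u ++ [i])
    · exact Or.inl ⟨hN, by rw [wtL_append]; simpa [wtL] using hwtu⟩
    · right
      simp only [NormalL, not_forall, not_not] at hN
      obtain ⟨j, x, y, hxy⟩ := hN
      rcases List.eq_nil_or_concat y with rfl | ⟨y₀, lst, hy⟩
      · -- w = x ++ W j, the occurrence is a suffix
        rw [List.append_nil] at hxy
        obtain ⟨c, i₀, hc⟩ := (List.eq_nil_or_concat (W j)).resolve_left (hne j)
        rw [List.concat_eq_append] at hc
        have hxy2 : u ++ [i] = (x ++ c) ++ [i₀] := by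
          rw [hxy, hc, List.append_assoc]
        obtain ⟨hu', hi⟩ := List.append_inj' hxy2 rfl
        have hii : i = i₀ := by simpa using hi
        refine ⟨j, x, normalL_infix (a := []) (b := c) hu (by rw [hu']; simp), ?_, hxy⟩
        have h1 : wtL τ u = wtL τ x + wtL τ c := by rw [hu', wtL_append]
        have h2 : σ j = wtL τ c + τ i₀ := by
          rw [← hwt j, hc, wtL_append]; simp [wtL]
        rw [hii] at hwtu
        omega
      · exfalso
        rw [List.concat_eq_append] at hy
        have hxy2 : u ++ [i] = (x ++ W j ++ y₀) ++ [lst] := by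
          rw [hxy, hy]; simp [List.append_assoc]
        obtain ⟨hu', -⟩ := List.append_inj' hxy2 rfl
        exact hu j x y₀ hu'
  · rintro (⟨hN, hwtw⟩ | ⟨j, v, hv, hwtv, rfl⟩)
    · have hw : w ≠ [] := by
        intro h
        rw [h] at hwtw
        simp [wtL] at hwtw
        omega
      obtain ⟨u, i, hw'⟩ := (List.eq_nil_or_concat w).resolve_left hw
      rw [List.concat_eq_append] at hw'
      subst hw'
      refine ⟨i, u, normalL_infix hN (by simp : u ++ [i] = [] ++ u ++ [i]), ?_, rfl⟩
      rw [← hwtw, wtL_append]; simp [wtL]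
    · obtain ⟨c, i₀, hc⟩ := (List.eq_nil_or_concat (W j)).resolve_left (hne j)
      rw [List.concat_eq_append] at hc
      refine ⟨i₀, v ++ c, key_normal hfac hchain hv hc, ?_, by rw [hc, List.append_assoc]⟩
      have h2 : σ j = wtL τ c + τ i₀ := by rw [← hwt j, hc, wtL_append]; simp [wtL]
      rw [wtL_append]
      omega

lemma NF_disj_E2 (hτ : ∀ i, 1 ≤ τ i) (n : ℕ) :
    Disjoint (NF τ W n) (E2 τ σ W n) := by
  simp only [Finset.disjoint_left]
  intro w hw hw2
  rw [mem_NF τ W hτ] at hw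
  rw [mem_E2 τ σ W hτ] at hw2
  obtain ⟨j, u, -, -, rfl⟩ := hw2
  exact hw.1 j u [] (by simp)

lemma count_identity (hτ : ∀ i, 1 ≤ τ i) (hne : ∀ j, W j ≠ [])
    (hfac : ∀ i j u v, W j = u ++ W i ++ v → i = j ∧ u = [] ∧ v = [])
    (hchain : ∀ j k (a t r : List (Fin d)), a ≠ [] → t ≠ [] → r ≠ [] →
      W j = a ++ t → W k = t ++ r → False)
    (hwt : ∀ j, wtL τ (W j) = σ j)
    {n : ℕ} (hn : 1 ≤ n) :
    ∑ i : Fin d, (DI τ W i n).card = (NF τ W n).card + ∑ j : Fin m, (DJ τ σ W j n).card := by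
  rw [← E1_card τ W hτ, ← E2_card τ σ W hτ hne hfac hchain,
    E1_eq τ σ W hτ hne hfac hchain hwt hn,
    Finset.card_union_of_disjoint (NF_disj_E2 τ σ W hτ n)]

end Count2

section Alg

variable {p d m : ℕ} [Fact p.Prime] {τ : Fin d → ℕ}

/-- the submodule of elements supported on weight-`n` words. -/
def homSub (p d : ℕ) (τ : Fin d → ℕ) (n : ℕ) : Submodule (ZMod p) (A p d) where
  carrier := {x : A p d | ∀ w ∈ x.coeff.support, wt τ w = n}
  add_mem' := by
    classical
    intro a b ha hb w hw
    rw [MonoidAlgebra.coeff_add] at hw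
    rcases Finset.mem_union.1 (Finsupp.support_add hw) with h | h
    · exact ha w h
    · exact hb w h
  zero_mem' := by intro w hw; simp at hw
  smul_mem' := by
    intro c x hx w hw
    rw [MonoidAlgebra.coeff_smul] at hw
    exact hx w (Finsupp.support_smul hw)

lemma mem_homSub {n : ℕ} {x : A p d} :
    x ∈ homSub p d τ n ↔ ∀ w ∈ x.coeff.support, wt τ w = n := by
  constructor <;> intro h <;> exact h

lemma Asub_eq_homSub (n : ℕ) : Asub p d τ n = homSub p d τ n := by
  apply le_antisymm
  · rw [Asub, Submodule.span_le]
    rintro x ⟨w, hwt, rfl⟩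
    simp only [SetLike.mem_coe, mem_homSub]
    intro w' hw'
    have : w' = w := by
      rwa [MonoidAlgebra.of_apply, MonoidAlgebra.coeff_single, Finsupp.support_single_ne_zero _ (one_ne_zero),
        Finset.mem_singleton] at hw'
    exact this ▸ hwt
  · intro x hx
    rw [mem_homSub] at hx
    rw [← MonoidAlgebra.sum_coeff_single x]
    apply Submodule.finsuppSum_mem
    intro w hw
    have : MonoidAlgebra.single w (x.coeff w) = (x.coeff w) • MonoidAlgebra.single w (1 : ZMod p) := by
      rw [MonoidAlgebra.smul_single', mul_one]
    rw [this]
    exact Submodule.smul_mem _ _ (Submodule.subset_span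
      ⟨w, hx w (Finsupp.mem_support_iff.2 hw), rfl⟩)

lemma mem_Asub_iff {n : ℕ} {x : A p d} :
    x ∈ Asub p d τ n ↔ ∀ w, coeff x w ≠ 0 → wt τ w = n := by
  rw [Asub_eq_homSub, mem_homSub]
  exact ⟨fun h w hw => h w (Finsupp.mem_support_iff.2 hw),
    fun h w hw => h w (Finsupp.mem_support_iff.1 hw)⟩

/-- the basic generator `u·ρ j·v` of the ideal. -/
noncomputable def gen (ρ : Fin m → A p d) (u : FreeMonoid (Fin d)) (j : Fin m)
    (v : FreeMonoid (Fin d)) : A p d :=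
  MonoidAlgebra.single u (1 : ZMod p) * ρ j * MonoidAlgebra.single v 1

lemma single_mul_mul_single (u v : FreeMonoid (Fin d)) (x : A p d) :
    MonoidAlgebra.single u (1 : ZMod p) * x * MonoidAlgebra.single v 1 =
      MonoidAlgebra.mapDomain (fun w => u * w * v) x := by
  induction x using MonoidAlgebra.induction_linear with
  | zero => simp [MonoidAlgebra.mapDomain_zero]
  | add f g hf hg =>
      rw [MonoidAlgebra.mapDomain_add, ← hf, ← hg, mul_add, add_mul]
  | single w c =>
      rw [MonoidAlgebra.mapDomain_single]
      show MonoidAlgebra.single u 1 * MonoidAlgebra.single w c * MonoidAlgebra.single v 1 = _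
      rw [MonoidAlgebra.single_mul_single, MonoidAlgebra.single_mul_single, one_mul, mul_one]

lemma mulword_inj (u v : FreeMonoid (Fin d)) :
    Function.Injective (fun w : FreeMonoid (Fin d) => u * w * v) := by
  intro a b h
  simp only [mul_assoc] at h
  exact mul_right_cancel (mul_left_cancel h)

lemma coeff_gen (ρ : Fin m → A p d) (u : FreeMonoid (Fin d)) (j : Fin m)
    (v w : FreeMonoid (Fin d)) :
    coeff (gen ρ u j v) (u * w * v) = coeff (ρ j) w := by
  rw [gen, single_mul_mul_single]
  exact Finsupp.mapDomain_apply (mulword_inj u v) _ w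

lemma coeff_gen_ne (ρ : Fin m → A p d) (u : FreeMonoid (Fin d)) (j : Fin m)
    (v W : FreeMonoid (Fin d)) (h : ∀ w, W ≠ u * w * v) :
    coeff (gen ρ u j v) W = 0 := by
  rw [gen, single_mul_mul_single, coeff]
  show Finsupp.mapDomain _ (ρ j).coeff W = 0
  rw [Finsupp.mapDomain_notin_range]
  rintro ⟨w, hw⟩
  exact h w hw.symm

lemma gen_expand (ρ : Fin m → A p d) (u : FreeMonoid (Fin d)) (j : Fin m)
    (v : FreeMonoid (Fin d)) :
    gen ρ u j v = (ρ j).coeff.sum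
      (fun w c => MonoidAlgebra.single (u * w * v) c) := by
  rw [gen, single_mul_mul_single]
  conv_lhs => rw [← MonoidAlgebra.sum_coeff_single (ρ j), MonoidAlgebra.mapDomain_sum]
  simp only [MonoidAlgebra.mapDomain_single]


lemma smul_single_mul_mul_single (u v : FreeMonoid (Fin d)) (x : A p d) (c c' : ZMod p) :
    MonoidAlgebra.single u c * x * MonoidAlgebra.single v c' =
      (c * c') • (MonoidAlgebra.single u (1 : ZMod p) * x * MonoidAlgebra.single v 1) := by
  have h1 : MonoidAlgebra.single u c = c • MonoidAlgebra.single u (1 : ZMod p) := by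
    rw [MonoidAlgebra.smul_single', mul_one]
  have h2 : MonoidAlgebra.single v c' = c' • MonoidAlgebra.single v (1 : ZMod p) := by
    rw [MonoidAlgebra.smul_single', mul_one]
  rw [h1, h2, smul_mul_assoc, smul_mul_assoc, mul_smul_comm, ← smul_assoc, smul_eq_mul]

lemma tsi_eq_span_gen (ρ : Fin m → A p d) :
    tsi p d (Set.range ρ) =
      Submodule.span (ZMod p) {x | ∃ u j v, x = gen ρ u j v} := by
  apply le_antisymm
  · rw [tsi, Submodule.span_le]
    rintro x ⟨a, s, b, ⟨j, rfl⟩, rfl⟩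
    have key : ∀ a b : A p d, a * ρ j * b ∈
        Submodule.span (ZMod p) {x | ∃ u j v, x = gen ρ u j v} := by
      intro a
      induction a using MonoidAlgebra.induction_linear with
      | zero => intro b; simp
      | add f g hf hg =>
          intro b
          rw [add_mul, add_mul]
          exact Submodule.add_mem _ (hf b) (hg b)
      | single u c =>
          intro b
          induction b using MonoidAlgebra.induction_linear with
          | zero => simp
          | add f g hf hg =>
              rw [mul_add]
              exact Submodule.add_mem _ hf hg
          | single v c' =>
              rw [show MonoidAlgebra.single u c * ρ j * MonoidAlgebra.single v c'
                  = (c * c') • gen ρ u j v from smul_single_mul_mul_single u v (ρ j) c c']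
              exact Submodule.smul_mem _ _ (Submodule.subset_span ⟨u, j, v, rfl⟩)
    exact key a b
  · rw [Submodule.span_le]
    rintro x ⟨u, j, v, rfl⟩
    rw [tsi]
    exact Submodule.subset_span
      ⟨MonoidAlgebra.single u 1, ρ j, MonoidAlgebra.single v 1, ⟨j, rfl⟩, rfl⟩

/-- the degree-`n` projection, as a linear map. -/
noncomputable def projn (p d : ℕ) (τ : Fin d → ℕ) (n : ℕ) : A p d →ₗ[ZMod p] A p d where
  toFun x := MonoidAlgebra.ofCoeff (Finsupp.filter (fun w => wt τ w = n) x.coeff)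
  map_add' a b := congrArg MonoidAlgebra.ofCoeff Finsupp.filter_add
  map_smul' c x := congrArg MonoidAlgebra.ofCoeff Finsupp.filter_smul

lemma projn_of_homSub {n n' : ℕ} {x : A p d} (hx : x ∈ homSub p d τ n') :
    projn p d τ n x = if n' = n then x else 0 := by
  rw [mem_homSub] at hx
  split_ifs with h
  · subst h
    show MonoidAlgebra.ofCoeff (Finsupp.filter _ _) = _
    ext w
    rw [MonoidAlgebra.coeff_ofCoeff, Finsupp.filter_apply]
    split_ifs with hw
    · rfl
    · symm
      by_contra hc
      exact hw (hx w (Finsupp.mem_support_iff.2 (fun h0 => hc (h0 ▸ rfl))))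
  · show MonoidAlgebra.ofCoeff (Finsupp.filter _ _) = _
    ext w
    rw [MonoidAlgebra.coeff_ofCoeff, Finsupp.filter_apply]
    simp only [MonoidAlgebra.coeff_zero, Finsupp.coe_zero, Pi.zero_apply]
    split_ifs with hw
    · by_contra hc
      exact h ((hx w (Finsupp.mem_support_iff.2 hc)).symm.trans hw)
    · rfl


lemma single_smul_one (w : FreeMonoid (Fin d)) (c : ZMod p) :
    MonoidAlgebra.single w c = c • MonoidAlgebra.single w (1 : ZMod p) := by
  rw [MonoidAlgebra.smul_single', mul_one]

lemma wt_mul (a b : FreeMonoid (Fin d)) : wt τ (a * b) = wt τ a + wt τ b := by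
  show ((FreeMonoid.toList (a * b)).map τ).sum = _
  rw [FreeMonoid.toList_mul, List.map_append, List.sum_append]
  rfl

lemma middle_expand (a b y : A p d) :
    a * y * b = y.coeff.sum
      (fun w c => c • (a * MonoidAlgebra.single w 1 * b)) := by
  induction y using MonoidAlgebra.induction_linear with
  | zero => simp
  | add f g hf hg =>
      rw [mul_add, add_mul, hf, hg, MonoidAlgebra.coeff_add, Finsupp.sum_add_index']
      · intro w; simp
      · intro w c1 c2; rw [add_smul]
  | single w c =>
      rw [MonoidAlgebra.coeff_single, Finsupp.sum_single_index (by simp)]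
      show a * MonoidAlgebra.single w c * b = _
      rw [single_smul_one, mul_smul_comm, smul_mul_assoc]

lemma gen_absorb_right (ρ : Fin m → A p d) (u s t w : FreeMonoid (Fin d)) (c : ZMod p)
    (j : Fin m) :
    (MonoidAlgebra.single u (1 : ZMod p) * ρ j * MonoidAlgebra.single s 1) *
        MonoidAlgebra.single w c * MonoidAlgebra.single t 1
      = c • gen ρ u j (s * w * t) := by
  rw [mul_assoc (MonoidAlgebra.single u (1 : ZMod p) * ρ j),
    mul_assoc (MonoidAlgebra.single u (1 : ZMod p) * ρ j),
    show MonoidAlgebra.single s (1 : ZMod p) * MonoidAlgebra.single w c * MonoidAlgebra.single t 1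
        = MonoidAlgebra.single (s * w * t) c by
      rw [MonoidAlgebra.single_mul_single, MonoidAlgebra.single_mul_single, one_mul, mul_one],
    single_smul_one (s * w * t) c, mul_smul_comm, gen]

lemma gen_absorb_left (ρ : Fin m → A p d) (u s t w : FreeMonoid (Fin d)) (c : ZMod p)
    (k : Fin m) :
    MonoidAlgebra.single u (1 : ZMod p) * MonoidAlgebra.single w c *
        (MonoidAlgebra.single s (1 : ZMod p) * ρ k * MonoidAlgebra.single t 1)
      = c • gen ρ (u * w * s) k t := by
  rw [MonoidAlgebra.single_mul_single, one_mul, single_smul_one (u * w) c, smul_mul_assoc, gen]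
  congr 1
  rw [← mul_assoc, ← mul_assoc, MonoidAlgebra.single_mul_single, one_mul]

lemma coeff_erase_ne {x : A p d} {a w : FreeMonoid (Fin d)}
    (h : (x.coeff.erase a) w ≠ 0) :
    w ≠ a ∧ coeff x w ≠ 0 := by
  by_cases hw : w = a
  · subst hw; rw [Finsupp.erase_same] at h; exact absurd rfl h
  · rw [Finsupp.erase_ne hw] at h; exact ⟨hw, h⟩

/-- `Finsupp.erase` viewed inside the algebra. -/
noncomputable def eraseA (w : FreeMonoid (Fin d)) (x : A p d) : A p d :=
  MonoidAlgebra.erase w x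

lemma single_add_eraseA (w : FreeMonoid (Fin d)) (x : A p d) :
    MonoidAlgebra.single w (coeff x w) + eraseA w x = x :=
  MonoidAlgebra.single_add_erase w x

variable (lt : FreeMonoid (Fin d) → FreeMonoid (Fin d) → Prop)

lemma reduce (ρ : Fin m → A p d) (σ : Fin m → ℕ) (wh : Fin m → FreeMonoid (Fin d))
    (hsup : ∀ j w, coeff (ρ j) w ≠ 0 → wt τ w = σ j)
    (hmem0 : ∀ j, coeff (ρ j) (wh j) ≠ 0)
    (hhigh : ∀ j, ∀ w, coeff (ρ j) w ≠ 0 → w ≠ wh j → lt w (wh j))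
    (hmul : ∀ α α' β γ, lt α α' → lt (β * α * γ) (β * α' * γ))
    (u s t : FreeMonoid (Fin d)) (j k : Fin m) :
    coeff (ρ k) (wh k) • gen ρ u j (s * wh k * t)
      - coeff (ρ j) (wh j) • gen ρ (u * wh j * s) k t
    ∈ Submodule.span (ZMod p) {x | ∃ u' j' v', x = gen ρ u' j' v' ∧
        lt (u' * wh j' * v') (u * wh j * s * wh k * t) ∧
        wt τ (u' * wh j' * v') = wt τ (u * wh j * s * wh k * t)} := by
  classical
  set a : A p d := MonoidAlgebra.single u (1 : ZMod p) * ρ j * MonoidAlgebra.single s 1 with ha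
  set b : A p d := MonoidAlgebra.single s (1 : ZMod p) * ρ k * MonoidAlgebra.single t 1 with hb
  have hT1 : a * ρ k * MonoidAlgebra.single t 1
      = coeff (ρ k) (wh k) • gen ρ u j (s * wh k * t)
        + a * eraseA (wh k) (ρ k) * MonoidAlgebra.single t 1 := by
    conv_lhs => rw [show (ρ k) = MonoidAlgebra.single (wh k) (coeff (ρ k) (wh k))
      + eraseA (wh k) (ρ k) from (single_add_eraseA (wh k) (ρ k)).symm]
    rw [mul_add, add_mul]
    congr 1
    rw [ha, gen_absorb_right]
  have hT2 : MonoidAlgebra.single u (1 : ZMod p) * ρ j * b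
      = coeff (ρ j) (wh j) • gen ρ (u * wh j * s) k t
        + MonoidAlgebra.single u (1 : ZMod p) * eraseA (wh j) (ρ j) * b := by
    conv_lhs => rw [show (ρ j) = MonoidAlgebra.single (wh j) (coeff (ρ j) (wh j))
      + eraseA (wh j) (ρ j) from (single_add_eraseA (wh j) (ρ j)).symm]
    rw [mul_add, add_mul]
    rw [add_left_inj]
    rw [hb, gen_absorb_left]
  have hTT : a * ρ k * MonoidAlgebra.single t 1
      = MonoidAlgebra.single u (1 : ZMod p) * ρ j * b := by
    rw [ha, hb, mul_assoc (MonoidAlgebra.single u (1 : ZMod p) * ρ j),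
      mul_assoc (MonoidAlgebra.single u (1 : ZMod p) * ρ j)]
  have hkey : coeff (ρ k) (wh k) • gen ρ u j (s * wh k * t)
        + a * eraseA (wh k) (ρ k) * MonoidAlgebra.single t 1
      = coeff (ρ j) (wh j) • gen ρ (u * wh j * s) k t
        + MonoidAlgebra.single u (1 : ZMod p) * eraseA (wh j) (ρ j) * b :=
    hT1.symm.trans (hTT.trans hT2)
  have heq : coeff (ρ k) (wh k) • gen ρ u j (s * wh k * t)
      - coeff (ρ j) (wh j) • gen ρ (u * wh j * s) k t
      = MonoidAlgebra.single u (1 : ZMod p) * eraseA (wh j) (ρ j) * b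
        - a * eraseA (wh k) (ρ k) * MonoidAlgebra.single t 1 := by
    have hstep : coeff (ρ k) (wh k) • gen ρ u j (s * wh k * t)
        - coeff (ρ j) (wh j) • gen ρ (u * wh j * s) k t
        = (coeff (ρ k) (wh k) • gen ρ u j (s * wh k * t)
            + a * eraseA (wh k) (ρ k) * MonoidAlgebra.single t 1)
          - (a * eraseA (wh k) (ρ k) * MonoidAlgebra.single t 1)
          - coeff (ρ j) (wh j) • gen ρ (u * wh j * s) k t := by abel
    rw [hstep, hkey]
    abel
  rw [heq]
  apply Submodule.sub_mem
  · -- terms gen ρ (u*w'*s) k t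
    rw [middle_expand]
    apply Submodule.finsuppSum_mem
    intro w hw
    obtain ⟨hwne, hwc⟩ := coeff_erase_ne (x := ρ j) hw
    rw [hb, gen_absorb_left]
    apply Submodule.smul_mem
    apply Submodule.smul_mem
    apply Submodule.subset_span
    refine ⟨u * w * s, k, t, rfl, ?_, ?_⟩
    · have h1 := hmul w (wh j) u (s * wh k * t) (hhigh j w hwc hwne)
      have e1 : u * w * (s * wh k * t) = u * w * s * wh k * t := by
        simp [mul_assoc]
      have e2 : u * wh j * (s * wh k * t) = u * wh j * s * wh k * t := by
        simp [mul_assoc]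
      rw [e1, e2] at h1
      exact h1
    · simp only [wt_mul]
      have h1 : wt τ w = σ j := hsup j w hwc
      have h2 : wt τ (wh j) = σ j := hsup j (wh j) (hmem0 j)
      omega
  · -- terms gen ρ u j (s*w*t)
    rw [middle_expand]
    apply Submodule.finsuppSum_mem
    intro w hw
    obtain ⟨hwne, hwc⟩ := coeff_erase_ne (x := ρ k) hw
    rw [ha, gen_absorb_right]
    apply Submodule.smul_mem
    apply Submodule.smul_mem
    apply Submodule.subset_span
    refine ⟨u, j, s * w * t, rfl, ?_, ?_⟩
    · have h1 := hmul w (wh k) (u * wh j * s) t (hhigh k w hwc hwne)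
      have e1 : u * wh j * (s * w * t) = (u * wh j * s) * w * t := by
        simp [mul_assoc]
      rw [e1]
      exact h1
    · simp only [wt_mul]
      have h1 : wt τ w = σ k := hsup k w hwc
      have h2 : wt τ (wh k) = σ k := hsup k (wh k) (hmem0 k)
      omega


/-- number of weight-`n` words smaller than `W`. -/
noncomputable def nuF (τ : Fin d → ℕ) (lt : FreeMonoid (Fin d) → FreeMonoid (Fin d) → Prop)
    (n : ℕ) (W : FreeMonoid (Fin d)) : ℕ :=
  by classical exact ((wordsF τ n).filter (fun w => lt (FreeMonoid.ofList w) W)).card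

lemma nu_lt (hτ : ∀ i, 1 ≤ τ i)
    (hirr : ∀ w, ¬ lt w w) (htrans : ∀ w w' w'', lt w w' → lt w' w'' → lt w w'')
    {n : ℕ} {W W' : FreeMonoid (Fin d)} (hW : wt τ W = n) (hW' : wt τ W' = n)
    (hlt : lt W' W) : nuF τ lt n W' < nuF τ lt n W := by
  classical
  unfold nuF
  apply Finset.card_lt_card
  constructor
  · intro w hw
    simp only [Finset.mem_filter] at hw ⊢
    exact ⟨hw.1, htrans _ _ _ hw.2 hlt⟩
  · intro hsub
    have hmem : FreeMonoid.toList W' ∈ (wordsF τ n).filter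
        (fun w => lt (FreeMonoid.ofList w) W) := by
      simp only [Finset.mem_filter]
      exact ⟨(mem_wordsF τ hτ).2 hW', hlt⟩
    have := hsub hmem
    simp only [Finset.mem_filter] at this
    exact hirr W' this.2

lemma gen_mem_span (hτ : ∀ i, 1 ≤ τ i) (ρ : Fin m → A p d) (σ : Fin m → ℕ)
    (wh : Fin m → FreeMonoid (Fin d))
    (hsup : ∀ j w, coeff (ρ j) w ≠ 0 → wt τ w = σ j)
    (hmem0 : ∀ j, coeff (ρ j) (wh j) ≠ 0)
    (hhigh : ∀ j, ∀ w, coeff (ρ j) w ≠ 0 → w ≠ wh j → lt w (wh j))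
    (hmul : ∀ α α' β γ, lt α α' → lt (β * α * γ) (β * α' * γ))
    (hirr : ∀ w, ¬ lt w w) (htrans : ∀ w w' w'', lt w w' → lt w' w'' → lt w w'')
    (hocc : ∀ (u v u' v' : FreeMonoid (Fin d)) (j k : Fin m),
      u * wh j * v = u' * wh k * v' →
      (u = u' ∧ j = k ∧ v = v') ∨
      (∃ s, u' = u * wh j * s ∧ v = s * wh k * v') ∨
      (∃ s, u = u' * wh k * s ∧ v' = s * wh j * v))
    (n : ℕ)
    (uF vF : FreeMonoid (Fin d) → FreeMonoid (Fin d)) (jF : FreeMonoid (Fin d) → Fin m)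
    (hpickF : ∀ W u j v, W = u * wh j * v → W = uF W * wh (jF W) * vF W) :
    ∀ (N : ℕ) (W : FreeMonoid (Fin d)), wt τ W = n →
      nuF τ lt n W < N → ∀ u j v, W = u * wh j * v →
      gen ρ u j v ∈ Submodule.span (ZMod p)
        {x | ∃ W', wt τ W' = n ∧ (∃ u' j' v', W' = u' * wh j' * v') ∧
          x = gen ρ (uF W') (jF W') (vF W')} := by
  intro N
  induction N with
  | zero => intro W _ hν; omega
  | succ N ih =>
    intro W hwtW hν u j v hW
    set G := Submodule.span (ZMod p)
        {x | ∃ W', wt τ W' = n ∧ (∃ u' j' v', W' = u' * wh j' * v') ∧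
          x = gen ρ (uF W') (jF W') (vF W')} with hG
    have hWc := hpickF W u j v hW
    have hgWmem : gen ρ (uF W) (jF W) (vF W) ∈ G :=
      Submodule.subset_span ⟨W, hwtW, ⟨u, j, v, hW⟩, rfl⟩
    -- small terms of weight n below W are in G by induction
    have hsmall : Submodule.span (ZMod p) {x | ∃ u' j' v', x = gen ρ u' j' v' ∧
        lt (u' * wh j' * v') W ∧ wt τ (u' * wh j' * v') = wt τ W} ≤ G := by
      rw [Submodule.span_le]
      rintro x ⟨u', j', v', rfl, hlt, hwt'⟩
      have h1 : wt τ (u' * wh j' * v') = n := by rw [hwt', hwtW]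
      have h2 : nuF τ lt n (u' * wh j' * v') < N := by
        have := nu_lt (lt := lt) hτ hirr htrans hwtW h1 hlt
        omega
      exact ih (u' * wh j' * v') h1 h2 u' j' v' rfl
    rcases hocc u v (uF W) (vF W) j (jF W) (hW.symm.trans hWc) with
      ⟨hu, hj, hv⟩ | ⟨s, hu0, hv0⟩ | ⟨s, hu0, hv0⟩
    · rw [hu, hj, hv]
      exact hgWmem
    · -- our occurrence is to the left of the canonical one
      have hred := reduce (lt := lt) ρ σ wh hsup hmem0 hhigh hmul u s (vF W) j (jF W)
      have hWW : W = u * wh j * s * wh (jF W) * vF W := by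
        conv_lhs => rw [hW, hv0]
        simp [mul_assoc]
      rw [← hWW, ← hu0] at hred
      have hc0 : coeff (ρ (jF W)) (wh (jF W)) ≠ 0 := hmem0 (jF W)
      have hveq : v = s * wh (jF W) * vF W := hv0
      have hexp : gen ρ u j v = (coeff (ρ (jF W)) (wh (jF W)))⁻¹ •
          ((coeff (ρ (jF W)) (wh (jF W)) • gen ρ u j (s * wh (jF W) * vF W)
            - coeff (ρ j) (wh j) • gen ρ (uF W) (jF W) (vF W))
           + coeff (ρ j) (wh j) • gen ρ (uF W) (jF W) (vF W)) := by
        rw [hveq]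
        rw [sub_add_cancel, ← smul_assoc, smul_eq_mul, inv_mul_cancel₀ hc0, one_smul]
      rw [hexp]
      exact Submodule.smul_mem _ _ (Submodule.add_mem _ (hsmall hred)
        (Submodule.smul_mem _ _ hgWmem))
    · -- our occurrence is to the right of the canonical one
      have hred := reduce (lt := lt) ρ σ wh hsup hmem0 hhigh hmul (uF W) s v (jF W) j
      have hWW : W = uF W * wh (jF W) * s * wh j * v := by
        conv_lhs => rw [hWc, hv0]
        simp [mul_assoc]
      rw [← hWW, ← hu0, ← hv0] at hred
      have hc0 : coeff (ρ (jF W)) (wh (jF W)) ≠ 0 := hmem0 (jF W)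
      have hexp : gen ρ u j v = (coeff (ρ (jF W)) (wh (jF W)))⁻¹ •
          (coeff (ρ j) (wh j) • gen ρ (uF W) (jF W) (vF W)
            - (coeff (ρ j) (wh j) • gen ρ (uF W) (jF W) (vF W)
                - coeff (ρ (jF W)) (wh (jF W)) • gen ρ u j v)) := by
        rw [sub_sub_cancel, ← smul_assoc, smul_eq_mul, inv_mul_cancel₀ hc0, one_smul]
      rw [hexp]
      exact Submodule.smul_mem _ _ (Submodule.sub_mem _
        (Submodule.smul_mem _ _ hgWmem) (hsmall hred))


lemma exists_lt_max {β : Type*} (lt' : β → β → Prop)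
    (htri : ∀ a b, lt' a b ∨ a = b ∨ lt' b a)
    (htrans' : ∀ a b c, lt' a b → lt' b c → lt' a c)
    (T : Finset β) (h : T.Nonempty) : ∃ b ∈ T, ∀ b' ∈ T, b' ≠ b → lt' b' b := by
  classical
  induction T using Finset.induction_on with
  | empty => exact absurd h (by simp)
  | insert a T' ha ih =>
    by_cases hT' : T'.Nonempty
    · obtain ⟨b, hb, hmax⟩ := ih hT'
      rcases htri a b with hab | rfl | hba
      · refine ⟨b, Finset.mem_insert_of_mem hb, ?_⟩
        intro c hc hcb
        rcases Finset.mem_insert.1 hc with rfl | hc'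
        · exact hab
        · exact hmax c hc' hcb
      · exact ⟨a, Finset.mem_insert_self _ _, fun c hc hcb => by
          rcases Finset.mem_insert.1 hc with rfl | hc'
          · exact absurd rfl hcb
          · exact hmax c hc' hcb⟩
      · refine ⟨a, Finset.mem_insert_self _ _, ?_⟩
        intro c hc hca
        rcases Finset.mem_insert.1 hc with rfl | hc'
        · exact absurd rfl hca
        · by_cases hcb : c = b
          · exact hcb ▸ hba
          · exact htrans' c b a (hmax c hc' hcb) hba
    · rw [Finset.not_nonempty_iff_eq_empty] at hT'
      subst hT'
      exact ⟨a, Finset.mem_insert_self _ _, fun c hc hcb => by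
        rcases Finset.mem_insert.1 hc with rfl | hc'
        · exact absurd rfl hcb
        · simp at hc'⟩


lemma card_le_finrank
    (htri : ∀ w w', lt w w' ∨ w = w' ∨ lt w' w)
    (hirr : ∀ w, ¬ lt w w) (htrans : ∀ w w' w'', lt w w' → lt w' w'' → lt w w'')
    (S : Finset (List (Fin d))) (F : List (Fin d) → A p d)
    (hlead : ∀ W ∈ S, coeff (F W) (FreeMonoid.ofList W) ≠ 0)
    (hsupp : ∀ W ∈ S, ∀ W', coeff (F W) W' ≠ 0 →
      W' = FreeMonoid.ofList W ∨ lt W' (FreeMonoid.ofList W))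
    (M : Submodule (ZMod p) (A p d)) [FiniteDimensional (ZMod p) M]
    (hFM : ∀ W ∈ S, F W ∈ M) :
    S.card ≤ Module.finrank (ZMod p) M := by
  classical
  have hind : LinearIndependent (ZMod p) (fun W : {x // x ∈ S} => F (W : List (Fin d))) := by
    rw [Fintype.linearIndependent_iff]
    intro g hg
    set G : List (Fin d) → ZMod p := fun W => if h : W ∈ S then g ⟨W, h⟩ else 0 with hGdef
    have hsum : ∑ W ∈ S, G W • F W = 0 := by
      rw [← hg, ← Finset.sum_coe_sort S (fun W => G W • F W)]
      apply Finset.sum_congr rfl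
      intro i _
      simp [hGdef, i.2]
    have hzero : ∀ W ∈ S, G W = 0 := by
      by_contra hcon
      push_neg at hcon
      obtain ⟨W1, hW1S, hW1⟩ := hcon
      set T : Finset (List (Fin d)) := S.filter (fun W => G W ≠ 0) with hTdef
      have hTne : (T.image FreeMonoid.ofList).Nonempty :=
        ⟨FreeMonoid.ofList W1, Finset.mem_image_of_mem _ (Finset.mem_filter.2 ⟨hW1S, hW1⟩)⟩
      obtain ⟨W₀, hW₀mem, hW₀max⟩ := exists_lt_max lt htri htrans _ hTne
      obtain ⟨Wl, hWlT, hWl₀⟩ := Finset.mem_image.1 hW₀mem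
      have hWlS : Wl ∈ S := (Finset.mem_filter.1 hWlT).1
      have hWlG : G Wl ≠ 0 := (Finset.mem_filter.1 hWlT).2
      have hcoeff : coeff (∑ W ∈ S, G W • F W) W₀ = ∑ W ∈ S, G W * coeff (F W) W₀ := by
        rw [coeff, MonoidAlgebra.coeff_sum]
        rw [Finset.sum_apply']
        apply Finset.sum_congr rfl
        intro i _
        rfl
      have hone : ∑ W ∈ S, G W * coeff (F W) W₀ = G Wl * coeff (F Wl) W₀ := by
        apply Finset.sum_eq_single Wl
        · intro b hbS hbWl
          by_cases hGb : G b = 0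
          · rw [hGb, zero_mul]
          · rcases (em (coeff (F b) W₀ = 0)) with h0 | h0
            · rw [h0, mul_zero]
            · exfalso
              have hbW₀ : FreeMonoid.ofList b ≠ W₀ := by
                intro hb
                exact hbWl (FreeMonoid.ofList.injective (hb.trans hWl₀.symm))
              have hmaxb := hW₀max (FreeMonoid.ofList b)
                (Finset.mem_image_of_mem _ (Finset.mem_filter.2 ⟨hbS, hGb⟩)) hbW₀
              rcases hsupp b hbS W₀ h0 with heq | hlt
              · exact hbW₀ heq.symm
              · exact hirr W₀ (htrans _ _ _ hlt hmaxb)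
        · intro hWlS'
          exact absurd hWlS hWlS'
      have hleadWl : coeff (F Wl) W₀ ≠ 0 := by
        rw [← hWl₀]
        exact hlead Wl hWlS
      have : G Wl * coeff (F Wl) W₀ = 0 := by
        rw [← hone, ← hcoeff, hsum]
        rfl
      exact hWlG ((mul_eq_zero.1 this).resolve_right hleadWl)
    intro i
    have := hzero i i.2
    simpa [hGdef, i.2] using this
  have hspan : Submodule.span (ZMod p)
      (Set.range (fun W : {x // x ∈ S} => F (W : List (Fin d)))) ≤ M := by
    rw [Submodule.span_le]
    rintro x ⟨⟨W, hW⟩, rfl⟩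
    exact hFM W hW
  have h1 := finrank_span_eq_card hind
  have h2 := Submodule.finrank_mono hspan
  rw [h1] at h2
  simpa using h2

lemma gen_supp (ρ : Fin m → A p d) (u : FreeMonoid (Fin d)) (j : Fin m)
    (v W' : FreeMonoid (Fin d)) (h : coeff (gen ρ u j v) W' ≠ 0) :
    ∃ w, coeff (ρ j) w ≠ 0 ∧ W' = u * w * v := by
  classical
  rw [gen, single_mul_mul_single, coeff] at h
  have hW' := Finsupp.mapDomain_support (Finsupp.mem_support_iff.2 h)
  obtain ⟨w, hw, rfl⟩ := Finset.mem_image.1 hW'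
  exact ⟨w, Finsupp.mem_support_iff.1 hw, rfl⟩

lemma gen_hom (ρ : Fin m → A p d) (σ : Fin m → ℕ)
    (hsup : ∀ j w, coeff (ρ j) w ≠ 0 → wt τ w = σ j)
    (u : FreeMonoid (Fin d)) (j : Fin m) (v : FreeMonoid (Fin d)) :
    gen ρ u j v ∈ homSub p d τ (wt τ u + σ j + wt τ v) := by
  rw [mem_homSub]
  intro w hw
  obtain ⟨w', hw', rfl⟩ := gen_supp ρ u j v w (Finsupp.mem_support_iff.1 hw)
  rw [wt_mul, wt_mul, hsup j w' hw']

lemma not_normal_iff (wh : Fin m → FreeMonoid (Fin d)) (W : FreeMonoid (Fin d)) :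
    (¬ NormalL (fun j => FreeMonoid.toList (wh j)) (FreeMonoid.toList W)) ↔
      ∃ u j v, W = u * wh j * v := by
  constructor
  · intro h
    simp only [NormalL, not_forall, not_not] at h
    obtain ⟨j, u, v, huv⟩ := h
    refine ⟨FreeMonoid.ofList u, j, FreeMonoid.ofList v, ?_⟩
    apply FreeMonoid.toList.injective
    simpa using huv
  · rintro ⟨u, j, v, rfl⟩
    intro hnorm
    exact hnorm j (FreeMonoid.toList u) (FreeMonoid.toList v) (by simp)


open Classical in
lemma Asub_eq_span_finset (hτ : ∀ i, 1 ≤ τ i) (n : ℕ) :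
    Asub p d τ n = Submodule.span (ZMod p)
      ↑((wordsF τ n).image
        (fun w => MonoidAlgebra.single (FreeMonoid.ofList w) (1 : ZMod p))) := by
  classical
  rw [Asub]
  congr 1
  ext x
  simp only [Finset.coe_image, Set.mem_image, Finset.mem_coe, Set.mem_setOf_eq]
  constructor
  · rintro ⟨w, hw, rfl⟩
    exact ⟨FreeMonoid.toList w, (mem_wordsF τ hτ).2 hw, rfl⟩
  · rintro ⟨w, hw, rfl⟩
    exact ⟨FreeMonoid.ofList w, (mem_wordsF τ hτ).1 hw, rfl⟩

lemma Asub_fd (hτ : ∀ i, 1 ≤ τ i) (n : ℕ) :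
    FiniteDimensional (ZMod p) (Asub p d τ n) := by
  classical
  rw [Asub_eq_span_finset hτ n]
  infer_instance

lemma finrank_Asub
    (htri : ∀ w w', lt w w' ∨ w = w' ∨ lt w' w)
    (hirr : ∀ w, ¬ lt w w) (htrans : ∀ w w' w'', lt w w' → lt w' w'' → lt w w'')
    (hτ : ∀ i, 1 ≤ τ i) (n : ℕ) :
    Module.finrank (ZMod p) (Asub p d τ n) = (wordsF τ n).card := by
  classical
  haveI := Asub_fd (p := p) hτ n
  apply le_antisymm
  · rw [Asub_eq_span_finset hτ n]
    exact le_trans (finrank_span_finset_le_card _) (Finset.card_image_le)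
  · classical
    apply card_le_finrank lt htri hirr htrans (wordsF τ n)
      (fun w => MonoidAlgebra.single (FreeMonoid.ofList w) (1 : ZMod p))
      (M := Asub p d τ n)
    · intro W _
      show (Finsupp.single (FreeMonoid.ofList W) (1 : ZMod p)) (FreeMonoid.ofList W) ≠ 0
      rw [Finsupp.single_eq_same]
      exact one_ne_zero
    · intro W _ W' h
      left
      by_contra hne
      have : (Finsupp.single (FreeMonoid.ofList W) (1 : ZMod p)) W' = 0 :=
        Finsupp.single_eq_of_ne' (Ne.symm hne)
      exact h this
    · intro W hW
      rw [Asub_eq_span_finset hτ n]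
      exact Submodule.subset_span (Finset.mem_coe.2 (Finset.mem_image_of_mem _ hW))


open Classical in
lemma finrank_inf_eq (hτ : ∀ i, 1 ≤ τ i)
    (ρ : Fin m → A p d) (σ : Fin m → ℕ) (wh : Fin m → FreeMonoid (Fin d))
    (hsup : ∀ j w, coeff (ρ j) w ≠ 0 → wt τ w = σ j)
    (hmem0 : ∀ j, coeff (ρ j) (wh j) ≠ 0)
    (hhigh : ∀ j, ∀ w, coeff (ρ j) w ≠ 0 → w ≠ wh j → lt w (wh j))
    (hmul : ∀ α α' β γ, lt α α' → lt (β * α * γ) (β * α' * γ))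
    (hirr : ∀ w, ¬ lt w w) (htrans : ∀ w w' w'', lt w w' → lt w' w'' → lt w w'')
    (htri : ∀ w w', lt w w' ∨ w = w' ∨ lt w' w)
    (hocc : ∀ (u v u' v' : FreeMonoid (Fin d)) (j k : Fin m),
      u * wh j * v = u' * wh k * v' →
      (u = u' ∧ j = k ∧ v = v') ∨
      (∃ s, u' = u * wh j * s ∧ v = s * wh k * v') ∨
      (∃ s, u = u' * wh k * s ∧ v' = s * wh j * v))
    (uF vF : FreeMonoid (Fin d) → FreeMonoid (Fin d)) (jF : FreeMonoid (Fin d) → Fin m)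
    (hpickF : ∀ W u j v, W = u * wh j * v → W = uF W * wh (jF W) * vF W)
    (n : ℕ) :
    Module.finrank (ZMod p) ↥(tsi p d (Set.range ρ) ⊓ Asub p d τ n)
      = (NNF τ (fun j => FreeMonoid.toList (wh j)) n).card := by
  haveI := Asub_fd (p := p) hτ n
  haveI : FiniteDimensional (ZMod p) ↥(tsi p d (Set.range ρ) ⊓ Asub p d τ n) :=
    Submodule.finiteDimensional_of_le inf_le_right
  have hwtwh : ∀ j, wt τ (wh j) = σ j := fun j => hsup j (wh j) (hmem0 j)
  set Wh : Fin m → List (Fin d) := fun j => FreeMonoid.toList (wh j) with hWh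
  set gfun : List (Fin d) → A p d := fun W =>
    gen ρ (uF (FreeMonoid.ofList W)) (jF (FreeMonoid.ofList W)) (vF (FreeMonoid.ofList W))
    with hgfun
  set G := Submodule.span (ZMod p)
      {x | ∃ W', wt τ W' = n ∧ (∃ u' j' v', W' = u' * wh j' * v') ∧
        x = gen ρ (uF W') (jF W') (vF W')} with hG
  have hGeq : G = Submodule.span (ZMod p) ↑((NNF τ Wh n).image gfun) := by
    rw [hG]
    congr 1
    ext x
    simp only [Finset.coe_image, Set.mem_image, Finset.mem_coe, Set.mem_setOf_eq]
    constructor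
    · rintro ⟨W', hwt', hdec, rfl⟩
      refine ⟨FreeMonoid.toList W', (mem_NNF τ Wh hτ).2 ⟨?_, hwt'⟩, rfl⟩
      rw [hWh]
      exact (not_normal_iff wh W').2 hdec
    · rintro ⟨W, hW, rfl⟩
      obtain ⟨hnn, hwt'⟩ := (mem_NNF τ Wh hτ).1 hW
      exact ⟨FreeMonoid.ofList W, hwt', (not_normal_iff wh (FreeMonoid.ofList W)).1 hnn, rfl⟩
  have hupper : tsi p d (Set.range ρ) ⊓ Asub p d τ n ≤ G := by
    rintro x ⟨hx1, hx2⟩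
    rw [Asub_eq_homSub] at hx2
    have hxproj : projn p d τ n x = x := by rw [projn_of_homSub hx2, if_pos rfl]
    have hxmem : x ∈ Submodule.map (projn p d τ n) (tsi p d (Set.range ρ)) :=
      ⟨x, hx1, hxproj⟩
    have hmap : Submodule.map (projn p d τ n) (tsi p d (Set.range ρ)) ≤ G := by
      rw [tsi_eq_span_gen, Submodule.map_span, Submodule.span_le]
      rintro y ⟨x', ⟨u, j, v, rfl⟩, rfl⟩
      show projn p d τ n (gen ρ u j v) ∈ (G : Set (A p d))
      rw [projn_of_homSub (gen_hom ρ σ hsup u j v)]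
      split_ifs with hdeg
      · have hwtW : wt τ (u * wh j * v) = n := by
          rw [wt_mul, wt_mul, hwtwh j]
          exact hdeg
        exact SetLike.mem_coe.2 (gen_mem_span lt hτ ρ σ wh hsup hmem0 hhigh hmul hirr
          htrans hocc n uF vF jF hpickF (nuF τ lt n (u * wh j * v) + 1) (u * wh j * v)
          hwtW (by omega) u j v rfl)
      · exact SetLike.mem_coe.2 (Submodule.zero_mem _)
    exact hmap hxmem
  apply le_antisymm
  · haveI : FiniteDimensional (ZMod p) G := by rw [hGeq]; infer_instance
    refine le_trans (Submodule.finrank_mono hupper) ?_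
    rw [hGeq]
    exact le_trans (finrank_span_finset_le_card _) Finset.card_image_le
  · apply card_le_finrank lt htri hirr htrans (NNF τ Wh n) gfun
      (M := tsi p d (Set.range ρ) ⊓ Asub p d τ n)
    · intro W hW
      obtain ⟨hnn, hwt'⟩ := (mem_NNF τ Wh hτ).1 hW
      obtain ⟨u, j, v, hdec⟩ := (not_normal_iff wh (FreeMonoid.ofList W)).1 hnn
      have hWc := hpickF (FreeMonoid.ofList W) u j v hdec
      have hco := coeff_gen ρ (uF (FreeMonoid.ofList W)) (jF (FreeMonoid.ofList W))
        (vF (FreeMonoid.ofList W)) (wh (jF (FreeMonoid.ofList W)))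
      rw [← hWc] at hco
      show coeff (gen ρ (uF (FreeMonoid.ofList W)) (jF (FreeMonoid.ofList W))
        (vF (FreeMonoid.ofList W))) (FreeMonoid.ofList W) ≠ 0
      rw [hco]
      exact hmem0 _
    · intro W hW W' hco
      obtain ⟨hnn, hwt'⟩ := (mem_NNF τ Wh hτ).1 hW
      obtain ⟨u, j, v, hdec⟩ := (not_normal_iff wh (FreeMonoid.ofList W)).1 hnn
      have hWc := hpickF (FreeMonoid.ofList W) u j v hdec
      obtain ⟨w, hwc, rfl⟩ := gen_supp ρ _ _ _ W' hco
      by_cases hwwh : w = wh (jF (FreeMonoid.ofList W))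
      · left
        rw [hwwh, ← hWc]
      · right
        have hl := hmul w (wh (jF (FreeMonoid.ofList W))) (uF (FreeMonoid.ofList W))
          (vF (FreeMonoid.ofList W)) (hhigh _ w hwc hwwh)
        rw [← hWc] at hl
        exact hl
    · intro W hW
      obtain ⟨hnn, hwt'⟩ := (mem_NNF τ Wh hτ).1 hW
      obtain ⟨u, j, v, hdec⟩ := (not_normal_iff wh (FreeMonoid.ofList W)).1 hnn
      have hWc := hpickF (FreeMonoid.ofList W) u j v hdec
      constructor
      · rw [tsi_eq_span_gen]
        exact Submodule.subset_span ⟨_, _, _, rfl⟩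
      · rw [Asub_eq_homSub]
        have hwteq : wt τ (uF (FreeMonoid.ofList W)) + σ (jF (FreeMonoid.ofList W))
            + wt τ (vF (FreeMonoid.ofList W)) = n := by
          have : wt τ (FreeMonoid.ofList W) = n := hwt'
          rw [hWc, wt_mul, wt_mul, hwtwh] at this
          exact this
        rw [← hwteq]
        exact gen_hom ρ σ hsup _ _ _


lemma finrank_map_mkQ (R : Submodule (ZMod p) (A p d)) (hτ : ∀ i, 1 ≤ τ i) (n : ℕ) :
    Module.finrank (ZMod p) ↥(Submodule.map R.mkQ (Asub p d τ n))
      + Module.finrank (ZMod p) ↥(R ⊓ Asub p d τ n)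
      = Module.finrank (ZMod p) ↥(Asub p d τ n) := by
  haveI := Asub_fd (p := p) hτ n
  set V := Asub p d τ n with hV
  set f := R.mkQ.comp V.subtype with hf
  have hr := LinearMap.finrank_range_add_finrank_ker f
  have hrange : LinearMap.range f = Submodule.map R.mkQ V := by
    rw [hf, LinearMap.range_comp, Submodule.range_subtype]
  have hker : LinearMap.ker f = Submodule.comap V.subtype (R ⊓ V) := by
    rw [hf, LinearMap.ker_comp, Submodule.ker_mkQ]
    ext x
    simp only [Submodule.mem_comap, Submodule.mem_inf]
    exact ⟨fun h => ⟨h, x.2⟩, fun h => h.1⟩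
  have hkerrank : Module.finrank (ZMod p) ↥(LinearMap.ker f)
      = Module.finrank (ZMod p) ↥(R ⊓ V) := by
    rw [hker]
    exact (Submodule.comapSubtypeEquivOfLe inf_le_right).finrank_eq
  rw [hrange, hkerrank] at hr
  exact hr

end Alg


/-- Anick's criterion: if `<` is a multiplicative order on the monomials and
the high terms (the `<`-greatest monomials occurring with nonzero coefficient) of the
homogeneous elements `ρ_1,…,ρ_m ∈ I_A` form a combinatorially free sequence of words,
then `ρ_1,…,ρ_m` is strongly free. -/
theorem stmt_4 (p d m : ℕ) [Fact p.Prime] (hd : 1 ≤ d)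
    (τ : Fin d → ℕ) (hτ : ∀ i, 1 ≤ τ i)
    (σ : Fin m → ℕ) (hσ : ∀ j, 1 ≤ σ j)
    (ρ : Fin m → A p d)
    (hρIA : ∀ j, ρ j ∈ IA p d)
    (hρhom : ∀ j, ρ j ∈ Asub p d τ (σ j))
    -- `lt` is a multiplicative order on the monomials:
    (lt : FreeMonoid (Fin d) → FreeMonoid (Fin d) → Prop)
    (hirr : ∀ w, ¬ lt w w)
    (htrans : ∀ w w' w'', lt w w' → lt w' w'' → lt w w'')
    (htri : ∀ w w', lt w w' ∨ w = w' ∨ lt w' w)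
    (hone : ∀ w, w ≠ 1 → lt 1 w)
    (hmul : ∀ α α' β γ, lt α α' → lt (β * α * γ) (β * α' * γ))
    -- `wh j` is the high term of `ρ j` with respect to `lt`:
    (wh : Fin m → FreeMonoid (Fin d))
    (hmem : ∀ j, coeff (ρ j) (wh j) ≠ 0)
    (hhigh : ∀ j, ∀ w, coeff (ρ j) w ≠ 0 → w ≠ wh j → lt w (wh j))
    (hcf : CombFree wh) :
    StronglyFree p d τ σ ρ := by
  classical
  have hsup : ∀ j w, coeff (ρ j) w ≠ 0 → wt τ w = σ j :=
    fun j w hw => (mem_Asub_iff.1 (hρhom j)) w hw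
  set Wh : Fin m → List (Fin d) := fun j => FreeMonoid.toList (wh j) with hWhdef
  have hwtwh : ∀ j, wt τ (wh j) = σ j := fun j => hsup j (wh j) (hmem j)
  have hwtL : ∀ j, wtL τ (Wh j) = σ j := fun j => hwtwh j
  have hne : ∀ j, Wh j ≠ [] := by
    intro j h
    have h1 : wt τ (wh j) = 0 := by
      show wtL τ (FreeMonoid.toList (wh j)) = 0
      rw [show FreeMonoid.toList (wh j) = [] from h]
      rfl
    have h2 := hσ j
    rw [hwtwh j] at h1
    omega
  have hofne : ∀ l : List (Fin d), l ≠ [] → FreeMonoid.ofList l ≠ 1 := by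
    intro l h h1
    exact h (congrArg FreeMonoid.toList h1)
  have hfac : ∀ i j u v, Wh j = u ++ Wh i ++ v → i = j ∧ u = [] ∧ v = [] := by
    intro i j u v h
    by_cases hij : i = j
    · subst hij
      have hlen := congrArg List.length h
      simp only [List.length_append] at hlen
      refine ⟨rfl, ?_, ?_⟩
      · exact List.eq_nil_of_length_eq_zero (by omega)
      · exact List.eq_nil_of_length_eq_zero (by omega)
    · exfalso
      apply hcf.1 i j hij (FreeMonoid.ofList u) (FreeMonoid.ofList v)
      apply FreeMonoid.toList.injective
      simpa using h
  have hchain : ∀ j k (a t r : List (Fin d)), a ≠ [] → t ≠ [] → r ≠ [] →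
      Wh j = a ++ t → Wh k = t ++ r → False := by
    intro j k a t r ha ht hr hj hk
    have h1 : wh k = FreeMonoid.ofList t * FreeMonoid.ofList r :=
      FreeMonoid.toList.injective (by simpa using hk)
    have h2 : wh j = FreeMonoid.ofList a * FreeMonoid.ofList t :=
      FreeMonoid.toList.injective (by simpa using hj)
    exact (hcf.2 k j (FreeMonoid.ofList t) (FreeMonoid.ofList r) (FreeMonoid.ofList a)
      (FreeMonoid.ofList t) (hofne t ht) (hofne r hr) (hofne a ha) (hofne t ht) h1 h2) rfl
  have hoccF : ∀ (u v u' v' : FreeMonoid (Fin d)) (j k : Fin m),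
      u * wh j * v = u' * wh k * v' →
      (u = u' ∧ j = k ∧ v = v') ∨
      (∃ s, u' = u * wh j * s ∧ v = s * wh k * v') ∨
      (∃ s, u = u' * wh k * s ∧ v' = s * wh j * v) := by
    intro u v u' v' j k h
    have hL : FreeMonoid.toList u ++ Wh j ++ FreeMonoid.toList v
        = FreeMonoid.toList u' ++ Wh k ++ FreeMonoid.toList v' := by
      simpa using congrArg FreeMonoid.toList h
    rcases occ hfac hchain hL with ⟨h1, h2, h3⟩ | ⟨s, h1, h2⟩ | ⟨s, h1, h2⟩
    · exact Or.inl ⟨FreeMonoid.toList.injective h1, h2, FreeMonoid.toList.injective h3⟩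
    · refine Or.inr (Or.inl ⟨FreeMonoid.ofList s, ?_, ?_⟩)
      · apply FreeMonoid.toList.injective; simpa using h1
      · apply FreeMonoid.toList.injective; simpa using h2
    · refine Or.inr (Or.inr ⟨FreeMonoid.ofList s, ?_, ?_⟩)
      · apply FreeMonoid.toList.injective; simpa using h1
      · apply FreeMonoid.toList.injective; simpa using h2
  unfold StronglyFree
  set R := tsi p d (Set.range ρ) with hR
  have key : ∀ n : ℕ, Module.finrank (ZMod p) ↥(R ⊓ Asub p d τ n)
      = (NNF τ Wh n).card := by
    intro n
    rcases Nat.eq_zero_or_pos m with hm | hm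
    · have hRbot : R = ⊥ := by
        rw [hR, tsi]
        have : {x : A p d | ∃ a s b, s ∈ Set.range ρ ∧ x = a * s * b} = ∅ := by
          ext x
          simp only [Set.mem_setOf_eq, Set.mem_empty_iff_false, iff_false]
          rintro ⟨a, s, b, ⟨j, -⟩, -⟩
          subst hm
          exact j.elim0
        rw [this, Submodule.span_empty]
      have hNN : NNF τ Wh n = ∅ := by
        ext w
        simp only [Finset.notMem_empty, iff_false]
        intro hw
        obtain ⟨hnn, -⟩ := (mem_NNF τ Wh hτ).1 hw
        subst hm
        exact hnn (fun j u v => j.elim0)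
      rw [hRbot, bot_inf_eq, hNN]
      simp
    · have hex : ∀ W : FreeMonoid (Fin d),
          ∃ z : FreeMonoid (Fin d) × Fin m × FreeMonoid (Fin d),
            (∃ u j v, W = u * wh j * v) → W = z.1 * wh z.2.1 * z.2.2 := by
        intro W
        by_cases h : ∃ u j v, W = u * wh j * v
        · obtain ⟨u, j, v, h⟩ := h
          exact ⟨⟨u, j, v⟩, fun _ => h⟩
        · exact ⟨⟨1, ⟨0, hm⟩, 1⟩, fun hc => absurd hc h⟩
      choose pick hpick using hex
      exact finrank_inf_eq lt hτ ρ σ wh hsup hmem hhigh hmul hirr htrans htri hoccF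
        (fun W => (pick W).1) (fun W => (pick W).2.2) (fun W => (pick W).2.1)
        (fun W u j v h => hpick W ⟨u, j, v, h⟩) n
  have hdimN : ∀ n : ℕ,
      Module.finrank (ZMod p) ↥(Submodule.map R.mkQ (Asub p d τ n)) = (NF τ Wh n).card := by
    intro n
    have h1 := finrank_map_mkQ R hτ n
    have h2 := key n
    have h3 := finrank_Asub (p := p) lt htri hirr htrans hτ n
    have h4 := wordsF_card_split τ Wh n
    omega
  constructor
  · rw [dimB, if_pos le_rfl]
    rw [show (0:ℤ).toNat = 0 from rfl, hdimN 0, NF_zero τ Wh hτ hne]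
    rfl
  · intro n hn
    set N := n.toNat with hNdef
    have hNn : (N : ℤ) = n := Int.toNat_of_nonneg (by omega)
    have hN1 : 1 ≤ N := by omega
    have hterm0 : dimB p d R τ n = (NF τ Wh N).card := by
      rw [dimB, if_pos (by omega), ← hNdef]
      exact hdimN N
    have htermI : ∀ i : Fin d, dimB p d R τ (n - (τ i : ℤ)) = (DI τ Wh i N).card := by
      intro i
      by_cases hle : (τ i : ℤ) ≤ n
      · have htn : (n - (τ i : ℤ)).toNat = N - τ i := by omega
        rw [dimB, if_pos (by omega), htn, hdimN, DI_card τ Wh hτ (by omega)]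
      · rw [dimB, if_neg (by omega), DI_card_zero τ Wh hτ (by omega)]
    have htermJ : ∀ j : Fin m, dimB p d R τ (n - (σ j : ℤ)) = (DJ τ σ Wh j N).card := by
      intro j
      by_cases hle : (σ j : ℤ) ≤ n
      · have htn : (n - (σ j : ℤ)).toNat = N - σ j := by omega
        rw [dimB, if_pos (by omega), htn, hdimN, DJ_card τ σ Wh hτ (by omega)]
      · rw [dimB, if_neg (by omega), DJ_card_zero τ σ Wh hτ (by omega)]
    have hcount := count_identity τ σ Wh hτ hne hfac hchain hwtL hN1
    rw [hterm0,
      show ∑ i : Fin d, (dimB p d R τ (n - (τ i : ℤ)) : ℤ)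
          = ∑ i : Fin d, ((DI τ Wh i N).card : ℤ) from
        Finset.sum_congr rfl (fun i _ => by rw [htermI i]),
      show ∑ j : Fin m, (dimB p d R τ (n - (σ j : ℤ)) : ℤ)
          = ∑ j : Fin m, ((DJ τ σ Wh j N).card : ℤ) from
        Finset.sum_congr rfl (fun j _ => by rw [htermJ j])]
    have hc' : (∑ i : Fin d, ((DI τ Wh i N).card : ℤ))
        = ((NF τ Wh N).card : ℤ) + ∑ j : Fin m, ((DJ τ σ Wh j N).card : ℤ) := by
      exact_mod_cast hcount
    linarith


end MildStmt
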